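/- If a point x of the Cantorval X has a digital representation (x_n) with digits in {0,2,3,5} such that x_n = 2 and x_{n+1} = 3 for infinitely many n, then this digital representation is unique: any sequence (y_n) with digits in {0,2,3,5} and ∑ y_n/4^n = x satisfies y_n = x_n for all n. -/

import Mathlib

noncomputable def centerOfDistances (X : Set ℝ) : Set ℝ :=
  {α | 0 ≤ α ∧ ∀ x ∈ X, ∃ y ∈ X, |x - y| = α}

noncomputable def subsums (a : ℕ → ℝ) : Set ℝ :=
  {x | ∃ A : Set ℕ, x = ∑' n : A, a n}

noncomputable def cantorval : Set ℝ :=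
  {x | ∃ d : ℕ → ℝ, (∀ n, d n ∈ ({0, 2, 3, 5} : Set ℝ)) ∧
    x = ∑' n : ℕ, d n / 4 ^ (n + 1)}

lemma aux_bound (c : ℕ → ℝ) (hc : ∀ n, |c n| ≤ 5) (n : ℕ) :
    |c n / 4 ^ (n + 1)| ≤ (5/4) * (1/4 : ℝ) ^ n := by
  rw [abs_div, abs_of_pos (by positivity : (0:ℝ) < 4 ^ (n+1))]
  have h : (5:ℝ) / 4 ^ (n+1) = 5/4 * (1/4)^n := by
    rw [pow_succ, one_div, inv_pow]; field_simp
  rw [← h]; gcongr; exact hc n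

lemma aux_summable (c : ℕ → ℝ) (hc : ∀ n, |c n| ≤ 5) :
    Summable (fun n => c n / 4 ^ (n + 1)) := by
  apply Summable.of_norm
  exact Summable.of_nonneg_of_le (fun n => norm_nonneg _) (fun n => aux_bound c hc n)
    (((summable_geometric_of_lt_one (by norm_num) (by norm_num)).mul_left _))

set_option maxHeartbeats 1000000 in
lemma aux_tail (c : ℕ → ℝ) (hc : ∀ n, |c n| ≤ 5) (m : ℕ) :
    |∑' k : ℕ, c (k + m) / 4 ^ (k + m + 1)| ≤ 5 / (3 * 4 ^ m) := by
  have hg : Summable (fun n : ℕ => (5/4) * (1/4 : ℝ) ^ n) :=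
    (summable_geometric_of_lt_one (by norm_num) (by norm_num)).mul_left _
  have hgm : Summable (fun k : ℕ => (5/4) * (1/4 : ℝ) ^ (k + m)) :=
    (summable_nat_add_iff m).mpr hg
  have habs : Summable (fun k : ℕ => |c (k + m) / 4 ^ (k + m + 1)|) :=
    Summable.of_nonneg_of_le (fun k => abs_nonneg _)
      (fun k => aux_bound c hc (k + m)) hgm
  have h1 : |∑' k : ℕ, c (k + m) / 4 ^ (k + m + 1)|
      ≤ ∑' k : ℕ, |c (k + m) / 4 ^ (k + m + 1)| :=
    norm_tsum_le_tsum_norm (f := fun k : ℕ => c (k + m) / 4 ^ (k + m + 1)) habs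
  have h2 : ∑' k : ℕ, |c (k + m) / 4 ^ (k + m + 1)|
      ≤ ∑' k : ℕ, (5/4) * (1/4 : ℝ) ^ (k + m) :=
    Summable.tsum_le_tsum (fun k => aux_bound c hc (k + m)) habs hgm
  have h3 : ∑' k : ℕ, (5/4) * (1/4 : ℝ) ^ (k + m) = 5 / (3 * 4 ^ m) := by
    have he : ∀ k : ℕ, (5/4) * (1/4 : ℝ) ^ (k + m) = ((5/4) * (1/4:ℝ)^m) * (1/4)^k := by
      intro k; rw [pow_add]; ring
    rw [tsum_congr he, tsum_mul_left, tsum_geometric_of_lt_one (by norm_num) (by norm_num)]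
    rw [one_div, inv_pow]
    have h4 : ((4:ℝ)^m) ≠ 0 := by positivity
    field_simp
    ring
  linarith

set_option maxHeartbeats 1000000 in
lemma aux_step (x y ε Tn T' : ℝ) (m : ℕ)
    (hx : x = 0 ∨ x = 2 ∨ x = 3 ∨ x = 5)
    (hy : y = 0 ∨ y = 2 ∨ y = 3 ∨ y = 5)
    (hε : ε = 1 ∨ ε = -1)
    (hrec : Tn = (x - y) / 4 ^ (m + 1) + T')
    (hbound : |T'| ≤ 5 / (3 * 4 ^ (m + 1)))
    (hTn : Tn = ε / 4 ^ m) :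
    (x - y = 3 * ε ∧ T' = ε / 4 ^ (m + 1)) ∨
    (x - y = 5 * ε ∧ T' = -ε / 4 ^ (m + 1)) := by
  have h4 : (0:ℝ) < (4:ℝ) ^ (m + 1) := by positivity
  have h4m : (0:ℝ) < (4:ℝ) ^ m := by positivity
  have hps : (4:ℝ) ^ (m + 1) = 4 ^ m * 4 := pow_succ 4 m
  have hT' : T' = (4 * ε - (x - y)) / 4 ^ (m + 1) := by
    rw [hTn] at hrec
    rw [eq_div_iff (ne_of_gt h4)]
    rw [hps] at hrec ⊢
    field_simp at hrec
    nlinarith [hrec]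
  have hb : |4 * ε - (x - y)| ≤ 5 / 3 := by
    have : |T'| = |4 * ε - (x - y)| / 4 ^ (m + 1) := by
      rw [hT', abs_div, abs_of_pos h4]
    rw [this] at hbound
    rw [div_le_div_iff₀ h4 (by positivity : (0:ℝ) < 3 * 4 ^ (m+1))] at hbound
    nlinarith [hbound]
  rw [abs_le] at hb
  obtain ⟨hb1, hb2⟩ := hb
  rcases hε with rfl | rfl <;> rcases hx with rfl | rfl | rfl | rfl <;>
    rcases hy with rfl | rfl | rfl | rfl <;>
    revert hb1 hb2 <;> norm_num [hT']

set_option maxHeartbeats 1000000 in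
theorem stmt18 (d : ℕ → ℝ) (hd : ∀ n, d n ∈ ({0, 2, 3, 5} : Set ℝ))
    (hinf : ∀ m : ℕ, ∃ n ≥ m, d n = 2 ∧ d (n + 1) = 3)
    (e : ℕ → ℝ) (he : ∀ n, e n ∈ ({0, 2, 3, 5} : Set ℝ))
    (hsum : ∑' n : ℕ, e n / 4 ^ (n + 1) = ∑' n : ℕ, d n / 4 ^ (n + 1)) :
    e = d := by
  classical
  have hd' : ∀ n, d n = 0 ∨ d n = 2 ∨ d n = 3 ∨ d n = 5 := by
    intro n; simpa [Set.mem_insert_iff] using hd n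
  have he' : ∀ n, e n = 0 ∨ e n = 2 ∨ e n = 3 ∨ e n = 5 := by
    intro n; simpa [Set.mem_insert_iff] using he n
  by_contra hne
  have hexists : ∃ n, e n ≠ d n := by
    by_contra h; push_neg at h; exact hne (funext h)
  set n := Nat.find hexists with hn
  have hne_n : e n ≠ d n := Nat.find_spec hexists
  have hmin : ∀ k, k < n → e k = d k := fun k hk => not_not.mp (Nat.find_min hexists hk)
  set c : ℕ → ℝ := fun k => d k - e k with hcdef
  have hcb : ∀ k, |c k| ≤ 5 := by
    intro k
    rcases hd' k with h1 | h1 | h1 | h1 <;> rcases he' k with h2 | h2 | h2 | h2 <;>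
      simp [hcdef, h1, h2] <;> norm_num
  set f : ℕ → ℝ := fun k => c k / 4 ^ (k + 1) with hfdef
  have hsf : Summable f := aux_summable c hcb
  have hsfm : ∀ m : ℕ, Summable (fun k => f (k + m)) :=
    fun m => (summable_nat_add_iff m).mpr hsf
  set T : ℕ → ℝ := fun m => ∑' k : ℕ, f (k + m) with hTdef
  have hTbound : ∀ m, |T m| ≤ 5 / (3 * 4 ^ m) := fun m => aux_tail c hcb m
  have hrec : ∀ m, T m = f m + T (m + 1) := by
    intro m
    have h1 : ∑' k : ℕ, f (k + m) = f (0 + m) + ∑' k : ℕ, f (k + 1 + m) :=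
      Summable.tsum_eq_zero_add (hsfm m)
    have h2 : ∑' k : ℕ, f (k + 1 + m) = ∑' k : ℕ, f (k + (m + 1)) :=
      tsum_congr fun k => by rw [show k + 1 + m = k + (m + 1) from by omega]
    simpa [h2] using h1
  have hsd : Summable (fun k => d k / 4 ^ (k + 1)) := by
    apply aux_summable
    intro k
    rcases hd' k with h | h | h | h <;> rw [h] <;> norm_num
  have hse : Summable (fun k => e k / 4 ^ (k + 1)) := by
    apply aux_summable
    intro k
    rcases he' k with h | h | h | h <;> rw [h] <;> norm_num
  have hT0 : T 0 = 0 := by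
    have h1 : T 0 = ∑' k : ℕ, f k := tsum_congr fun k => by rw [Nat.add_zero]
    have h2 : ∀ k : ℕ, f k = d k / 4 ^ (k + 1) - e k / 4 ^ (k + 1) := by
      intro k; simp [hfdef, hcdef, sub_div]
    rw [h1, tsum_congr h2, Summable.tsum_sub hsd hse, hsum, sub_self]
  have hTmle : ∀ m, m ≤ n → T m = 0 := by
    intro m
    induction m with
    | zero => intro _; exact hT0
    | succ k ih =>
        intro hk
        have hk' : k < n := Nat.lt_of_succ_le hk
        have hfk : f k = 0 := by
          have : e k = d k := hmin k hk'
          simp [hfdef, hcdef, this]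
        have := hrec k
        rw [hfk, zero_add] at this
        rw [← this]
        exact ih (le_of_lt hk')
  -- T (n+1) = (e n - d n)/4^(n+1), and |e n - d n| small forces ε = ±1
  have hTn1 : T (n + 1) = (e n - d n) / 4 ^ (n + 1) := by
    have h := hrec n
    rw [hTmle n le_rfl] at h
    have : T (n + 1) = -f n := by linarith
    rw [this]
    simp [hfdef, hcdef, neg_div]
    ring_nf
  have hb1 : |e n - d n| ≤ 5 / 3 := by
    have hbd := hTbound (n + 1)
    rw [hTn1, abs_div, abs_of_pos (by positivity : (0:ℝ) < 4 ^ (n+1))] at hbd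
    rw [div_le_div_iff₀ (by positivity) (by positivity : (0:ℝ) < 3 * 4 ^ (n+1))] at hbd
    nlinarith [hbd, pow_pos (show (0:ℝ) < 4 by norm_num) (n+1)]
  have hε0 : e n - d n = 1 ∨ e n - d n = -1 := by
    rw [abs_le] at hb1
    obtain ⟨hl, hr⟩ := hb1
    rcases hd' n with h1 | h1 | h1 | h1 <;> rcases he' n with h2 | h2 | h2 | h2 <;>
      rw [h1, h2] at hne_n hl hr ⊢ <;> revert hne_n hl hr <;> norm_num
  -- the inductive state
  have hstate : ∀ m : ℕ, ∃ ε : ℝ, (ε = 1 ∨ ε = -1) ∧ T (n + 1 + m) = ε / 4 ^ (n + 1 + m) := by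
    intro m
    induction m with
    | zero =>
        refine ⟨e n - d n, ?_, ?_⟩
        · exact hε0
        · simpa using hTn1
    | succ k ih =>
        obtain ⟨ε, hε, hT⟩ := ih
        have hstep := aux_step (d (n + 1 + k)) (e (n + 1 + k)) ε (T (n + 1 + k))
          (T (n + 1 + k + 1)) (n + 1 + k) (hd' _) (he' _) hε (hrec _) (hTbound _) hT
        rcases hstep with ⟨_, h⟩ | ⟨_, h⟩
        · exact ⟨ε, hε, by rw [show n + 1 + (k+1) = n + 1 + k + 1 from by omega]; exact h⟩
        · refine ⟨-ε, ?_, by rw [show n + 1 + (k+1) = n + 1 + k + 1 from by omega]; exact h⟩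
          rcases hε with rfl | rfl
          · right; norm_num
          · left; norm_num
  -- now use hinf to get a contradiction
  obtain ⟨n', hn', h2, h3⟩ := hinf (n + 1)
  obtain ⟨ε, hε, hT⟩ := hstate (n' - (n + 1))
  rw [show n + 1 + (n' - (n + 1)) = n' from by omega] at hT
  have hstep1 := aux_step (d n') (e n') ε (T n') (T (n' + 1)) n'
    (hd' _) (he' _) hε (hrec _) (hTbound _) hT
  rcases hε with rfl | rfl
  · -- ε = 1 : d n' - e n' = 3 or 5, impossible since d n' = 2
    rcases hstep1 with ⟨h, _⟩ | ⟨h, _⟩ <;> rw [h2] at h <;>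
      rcases he' n' with h4 | h4 | h4 | h4 <;> rw [h4] at h <;> norm_num at h
  · -- ε = -1 : d n' - e n' = -3 (e n' = 5) or -5 (impossible)
    rcases hstep1 with ⟨h, hT'⟩ | ⟨h, hT'⟩
    · -- T (n'+1) = -1 / 4^(n'+1); step again at n'+1
      have hstep2 := aux_step (d (n' + 1)) (e (n' + 1)) (-1 : ℝ) (T (n' + 1))
        (T (n' + 1 + 1)) (n' + 1) (hd' _) (he' _) (Or.inr rfl) (hrec _) (hTbound _) hT'
      rcases hstep2 with ⟨h5, _⟩ | ⟨h5, _⟩ <;> rw [h3] at h5 <;>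
        rcases he' (n' + 1) with h6 | h6 | h6 | h6 <;> rw [h6] at h5 <;> norm_num at h5
    · rw [h2] at h
      rcases he' n' with h4 | h4 | h4 | h4 <;> rw [h4] at h <;> norm_num at h
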